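/- For every real B ≥ 0 and every ε > 0 there is a constant C = C(B, ε) such that for all real X ≥ 1 and all positive integers r: Σ (τ(q₁)^B/q₁) · (τ(q₂)^B/q₂) · (τ(q₃)^B/q₃) ≤ C · r^ε · X^{ε-1}, where the sum is over all triples (q₁, q₂, q₃) of squarefree positive integers with max(q₁, q₂, q₃) ≥ X, q₁ | r·q₂·q₃, q₂ | r·q₁·q₃, and q₃ | r·q₁·q₂. -/

import Mathlib

open scoped ENNReal


lemma tau_rpow_bound (κ : ℝ) (hκ : 0 < κ) :
    ∃ C : ℝ, 1 ≤ C ∧ ∀ n : ℕ, 1 ≤ n → (n.divisors.card : ℝ) ≤ C * (n : ℝ) ^ κ := by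
  have h2κ : (1:ℝ) < (2:ℝ) ^ κ := by
    have := Real.rpow_lt_rpow_of_exponent_lt (x := 2) one_lt_two hκ
    simpa using this
  set c : ℝ := (2:ℝ) ^ κ - 1 with hc
  have hcpos : 0 < c := by simp only [hc]; linarith
  set M : ℝ := max 1 c⁻¹ with hM
  have hM1 : 1 ≤ M := le_max_left _ _
  have hMc : 1 ≤ M * c := by
    calc (1:ℝ) = c⁻¹ * c := by field_simp
    _ ≤ M * c := by gcongr; exact le_max_right _ _
  have key : ∀ a : ℕ, (a + 1 : ℝ) ≤ M * (2:ℝ) ^ ((a:ℝ) * κ) := by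
    intro a
    have h1 : (2:ℝ) ^ ((a:ℝ) * κ) = (1 + c) ^ a := by
      rw [mul_comm, Real.rpow_mul (by norm_num), Real.rpow_natCast]
      norm_num [hc]
    rw [h1]
    have h2 : 1 + (a:ℝ) * c ≤ (1 + c) ^ a := one_add_mul_le_pow (by linarith) a
    have h3 : (a + 1 : ℝ) ≤ M * (1 + (a:ℝ) * c) := by
      have he : M * (1 + (a:ℝ) * c) = M + (a:ℝ) * (M * c) := by ring
      rw [he]
      have ha0 : (0:ℝ) ≤ a := Nat.cast_nonneg a
      nlinarith
    exact h3.trans (mul_le_mul_of_nonneg_left h2 (by linarith))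
  set P0 : ℕ := ⌈(2:ℝ) ^ (1/κ)⌉₊ with hP0
  have hbig : ∀ p : ℕ, Nat.Prime p → P0 < p → (2:ℝ) ≤ (p:ℝ) ^ κ := by
    intro p hp hpP
    have h1 : (2:ℝ) ^ (1/κ) ≤ (p:ℝ) := by
      calc (2:ℝ) ^ (1/κ) ≤ (⌈(2:ℝ) ^ (1/κ)⌉₊ : ℝ) := Nat.le_ceil _
      _ ≤ (p:ℝ) := by exact_mod_cast (Nat.le_of_lt hpP)
    calc (2:ℝ) = ((2:ℝ) ^ (1/κ)) ^ κ := by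
          rw [← Real.rpow_mul (by norm_num), one_div_mul_cancel hκ.ne', Real.rpow_one]
    _ ≤ (p:ℝ) ^ κ := Real.rpow_le_rpow (Real.rpow_nonneg (by norm_num) _) h1 hκ.le
  refine ⟨M ^ (P0 + 1), one_le_pow₀ hM1, ?_⟩
  intro n hn
  have hn0 : n ≠ 0 := by omega
  have hfac : ∀ p ∈ n.primeFactors,
      ((n.factorization p + 1 : ℕ) : ℝ) ≤
        (if p ≤ P0 then M else 1) * (p:ℝ) ^ ((n.factorization p : ℝ) * κ) := by
    intro p hp
    have hpp : Nat.Prime p := Nat.prime_of_mem_primeFactors hp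
    have hp2 : (2:ℝ) ≤ (p:ℝ) := by exact_mod_cast hpp.two_le
    set a := n.factorization p
    by_cases hsmall : p ≤ P0
    · simp only [if_pos hsmall]
      have h4 : (2:ℝ) ^ ((a:ℝ) * κ) ≤ (p:ℝ) ^ ((a:ℝ) * κ) :=
        Real.rpow_le_rpow (by norm_num) hp2 (by positivity)
      calc ((a + 1 : ℕ) : ℝ) = (a:ℝ) + 1 := by push_cast; ring
      _ ≤ M * (2:ℝ) ^ ((a:ℝ) * κ) := key a
      _ ≤ M * (p:ℝ) ^ ((a:ℝ) * κ) := mul_le_mul_of_nonneg_left h4 (by linarith)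
    · simp only [if_neg hsmall, one_mul]
      have h1 : ((a + 1 : ℕ) : ℝ) ≤ (2:ℝ) ^ a := by
        exact_mod_cast (Nat.lt_two_pow_self (n := a))
      have h2 : (2:ℝ) ^ a ≤ ((p:ℝ) ^ κ) ^ a :=
        pow_le_pow_left₀ (by norm_num) (hbig p hpp (not_le.mp hsmall)) a
      refine (h1.trans h2).trans (le_of_eq ?_)
      rw [← Real.rpow_natCast ((p:ℝ)^κ) a, ← Real.rpow_mul (by positivity), mul_comm]
  have hcard : (n.divisors.card : ℝ) = ∏ p ∈ n.primeFactors, ((n.factorization p + 1 : ℕ) : ℝ) := by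
    rw [Nat.card_divisors hn0]; push_cast; ring
  have hnκ : (n:ℝ) ^ κ = ∏ p ∈ n.primeFactors, (p:ℝ) ^ ((n.factorization p : ℝ) * κ) := by
    conv_lhs => rw [← Nat.factorization_prod_pow_eq_self hn0]
    rw [Finsupp.prod, Nat.support_factorization]
    push_cast
    rw [← Real.finset_prod_rpow _ _ (fun i _ => by positivity) κ]
    refine Finset.prod_congr rfl fun p hp => ?_
    rw [← Real.rpow_natCast (p:ℝ) (n.factorization p), ← Real.rpow_mul (by positivity)]
  have hw : ∏ p ∈ n.primeFactors, (if p ≤ P0 then M else 1) ≤ M ^ (P0 + 1) := by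
    rw [Finset.prod_ite, Finset.prod_const, Finset.prod_const, one_pow, mul_one]
    refine pow_le_pow_right₀ hM1 ?_
    have hsub : n.primeFactors.filter (· ≤ P0) ⊆ Finset.range (P0 + 1) := by
      intro x hx
      simp only [Finset.mem_filter] at hx
      simp [Nat.lt_succ_iff, hx.2]
    calc _ ≤ (Finset.range (P0 + 1)).card := Finset.card_le_card hsub
    _ = P0 + 1 := Finset.card_range _
  calc (n.divisors.card : ℝ)
      = ∏ p ∈ n.primeFactors, ((n.factorization p + 1 : ℕ) : ℝ) := hcard
    _ ≤ ∏ p ∈ n.primeFactors, (if p ≤ P0 then M else 1) * (p:ℝ) ^ ((n.factorization p : ℝ) * κ) :=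
        Finset.prod_le_prod (fun p _ => by positivity) hfac
    _ = (∏ p ∈ n.primeFactors, (if p ≤ P0 then M else 1)) *
          ∏ p ∈ n.primeFactors, (p:ℝ) ^ ((n.factorization p : ℝ) * κ) := Finset.prod_mul_distrib
    _ ≤ M ^ (P0 + 1) * (n:ℝ) ^ κ := by
        rw [hnκ]
        exact mul_le_mul_of_nonneg_right hw (Finset.prod_nonneg fun p _ => by positivity)



lemma tau_pow_bound (B : ℝ) (hB : 0 ≤ B) (η : ℝ) (hη : 0 < η) :
    ∃ C : ℝ, 1 ≤ C ∧ ∀ n : ℕ, 1 ≤ n → ((n.divisors.card : ℝ)) ^ B ≤ C * (n : ℝ) ^ η := by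
  obtain ⟨C0, hC0, h⟩ := tau_rpow_bound (η / (B + 1)) (by positivity)
  refine ⟨C0 ^ B, Real.one_le_rpow hC0 hB, fun n hn => ?_⟩
  have hn1 : (1:ℝ) ≤ (n:ℝ) := by exact_mod_cast hn
  have h1 : ((n.divisors.card : ℝ)) ^ B ≤ (C0 * (n:ℝ) ^ (η / (B+1))) ^ B :=
    Real.rpow_le_rpow (Nat.cast_nonneg _) (h n hn) hB
  have h2 : (C0 * (n:ℝ) ^ (η / (B+1))) ^ B = C0 ^ B * (n:ℝ) ^ (η / (B+1) * B) := by
    rw [Real.mul_rpow (by linarith) (by positivity), ← Real.rpow_mul (Nat.cast_nonneg n)]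
  have h3 : (n:ℝ) ^ (η / (B+1) * B) ≤ (n:ℝ) ^ η := by
    apply Real.rpow_le_rpow_of_exponent_le hn1
    rw [div_mul_eq_mul_div]
    rw [div_le_iff₀ (by positivity)]
    nlinarith
  calc ((n.divisors.card : ℝ)) ^ B ≤ C0 ^ B * (n:ℝ) ^ (η / (B+1) * B) := by rw [← h2]; exact h1
  _ ≤ C0 ^ B * (n:ℝ) ^ η := by
      have : (0:ℝ) ≤ C0 ^ B := Real.rpow_nonneg (by linarith) _
      nlinarith

lemma pseries_ne_top (s : ℝ) (hs : s < -1) :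
    (∑' n : ℕ, (if 1 ≤ n then ((n:ℝ≥0∞)) ^ s else 0)) ≠ ⊤ := by
  have hsum : Summable (fun n : ℕ => (n:ℝ) ^ s) := Real.summable_nat_rpow.2 hs
  have heq : ∀ n : ℕ, (if 1 ≤ n then ((n:ℝ≥0∞)) ^ s else 0) = ENNReal.ofReal ((n:ℝ) ^ s) := by
    intro n
    rcases Nat.eq_zero_or_pos n with rfl | hn
    · simp [Real.zero_rpow (by linarith : s ≠ 0)]
    · have hn' : 1 ≤ n := hn
      rw [if_pos hn', ← ENNReal.ofReal_natCast, ENNReal.ofReal_rpow_of_pos (by exact_mod_cast hn)]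
  rw [tsum_congr heq, ← ENNReal.ofReal_tsum_of_nonneg (fun n => Real.rpow_nonneg (Nat.cast_nonneg _) _) hsum]
  exact ENNReal.ofReal_ne_top

lemma div_sum_le (r : ℕ) (hr : 0 < r) (c : ℝ) (hc : c ≤ 0) :
    (∑' a : ℕ, if a ∣ r ∧ 1 ≤ a then ((a:ℝ≥0∞)) ^ c else 0) ≤ (r.divisors.card : ℝ≥0∞) := by
  rw [tsum_eq_sum (s := r.divisors) (fun b hb => by
    rw [if_neg]
    intro ⟨h1, h2⟩
    exact hb (Nat.mem_divisors.mpr ⟨h1, hr.ne'⟩))]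
  calc ∑ a ∈ r.divisors, (if a ∣ r ∧ 1 ≤ a then ((a:ℝ≥0∞)) ^ c else 0)
      ≤ ∑ a ∈ r.divisors, 1 := by
        refine Finset.sum_le_sum fun a ha => ?_
        split_ifs with h
        · have ha1 : (1:ℝ≥0∞) ≤ (a:ℝ≥0∞) := by exact_mod_cast h.2
          calc ((a:ℝ≥0∞)) ^ c ≤ ((a:ℝ≥0∞)) ^ (0:ℝ) :=
              ENNReal.rpow_le_rpow_of_exponent_le ha1 hc
          _ = 1 := ENNReal.rpow_zero
        · exact zero_le
  _ = (r.divisors.card : ℝ≥0∞) := by simp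

lemma tsum_prod_mul {α β : Type*} (f : α → ℝ≥0∞) (g : β → ℝ≥0∞) :
    ∑' p : α × β, f p.1 * g p.2 = (∑' a, f a) * (∑' b, g b) := by
  rw [ENNReal.tsum_prod']
  calc ∑' (a : α) (b : β), f a * g b = ∑' (a : α), f a * ∑' (b : β), g b := by
        refine tsum_congr fun a => ?_
        exact ENNReal.tsum_mul_left
  _ = (∑' a, f a) * (∑' b, g b) := ENNReal.tsum_mul_right


lemma cop_aux {a b : ℕ} (h : ∀ p : ℕ, p.Prime → p ∣ a → p ∣ b → False) : Nat.Coprime a b := by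
  unfold Nat.Coprime
  by_contra hg
  obtain ⟨p, hp, hpd⟩ := Nat.exists_prime_and_dvd hg
  exact h p hp (hpd.trans (Nat.gcd_dvd_left _ _)) (hpd.trans (Nat.gcd_dvd_right _ _))

lemma sqf_dvd {a r : ℕ} (ha : Squarefree a) (h : ∀ p : ℕ, p.Prime → p ∣ a → p ∣ r) : a ∣ r := by
  rw [← Nat.prod_primeFactors_of_squarefree ha]
  exact Finset.prod_primes_dvd r (fun p hp => (Nat.prime_of_mem_primeFactors hp).prime)
    (fun p hp => h p (Nat.prime_of_mem_primeFactors hp) (Nat.dvd_of_mem_primeFactors hp))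

lemma split_gen {q g1 g2 f : ℕ} (hsf : Squarefree q) (hg1 : g1 ∣ q) (hg2 : g2 ∣ q)
    (hf1 : f ∣ g1) (hcommon : ∀ p : ℕ, p.Prime → p ∣ g1 → p ∣ g2 → p ∣ f) :
    (g1 / f) * g2 ∣ q := by
  have hef : g1 / f * f = g1 := Nat.div_mul_cancel hf1
  have he1 : g1 / f ∣ g1 := Dvd.intro f hef
  refine Nat.Coprime.mul_dvd_of_dvd_of_dvd ?_ (he1.trans hg1) hg2
  refine cop_aux fun p hp hpe hpg2 => ?_
  have hpf : p ∣ f := hcommon p hp (hpe.trans he1) hpg2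
  have : p * p ∣ q := ((mul_dvd_mul hpe hpf).trans hef.dvd).trans hg1
  exact hp.not_isUnit (hsf p this)

section Decomp
variable (q1 q2 q3 : ℕ)

def dF : ℕ := Nat.gcd q1 (Nat.gcd q2 q3)
def dE12 : ℕ := Nat.gcd q1 q2 / dF q1 q2 q3
def dE13 : ℕ := Nat.gcd q1 q3 / dF q1 q2 q3
def dE23 : ℕ := Nat.gcd q2 q3 / dF q1 q2 q3
def dA1 : ℕ := q1 / (dE12 q1 q2 q3 * (dE13 q1 q2 q3 * dF q1 q2 q3))
def dA2 : ℕ := q2 / (dE12 q1 q2 q3 * (dE23 q1 q2 q3 * dF q1 q2 q3))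
def dA3 : ℕ := q3 / (dE13 q1 q2 q3 * (dE23 q1 q2 q3 * dF q1 q2 q3))

variable {q1 q2 q3}

lemma dF_dvd_g12 : dF q1 q2 q3 ∣ Nat.gcd q1 q2 :=
  Nat.dvd_gcd (Nat.gcd_dvd_left _ _) ((Nat.gcd_dvd_right _ _).trans (Nat.gcd_dvd_left _ _))

lemma dF_dvd_g13 : dF q1 q2 q3 ∣ Nat.gcd q1 q3 :=
  Nat.dvd_gcd (Nat.gcd_dvd_left _ _) ((Nat.gcd_dvd_right _ _).trans (Nat.gcd_dvd_right _ _))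

lemma dF_dvd_g23 : dF q1 q2 q3 ∣ Nat.gcd q2 q3 := Nat.gcd_dvd_right _ _

lemma dE12_mul : dE12 q1 q2 q3 * dF q1 q2 q3 = Nat.gcd q1 q2 := Nat.div_mul_cancel dF_dvd_g12
lemma dE13_mul : dE13 q1 q2 q3 * dF q1 q2 q3 = Nat.gcd q1 q3 := Nat.div_mul_cancel dF_dvd_g13
lemma dE23_mul : dE23 q1 q2 q3 * dF q1 q2 q3 = Nat.gcd q2 q3 := Nat.div_mul_cancel dF_dvd_g23

lemma split_q1 (h1 : Squarefree q1) :
    dE12 q1 q2 q3 * (dE13 q1 q2 q3 * dF q1 q2 q3) ∣ q1 := by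
  rw [dE13_mul]
  exact split_gen h1 (Nat.gcd_dvd_left _ _) (Nat.gcd_dvd_left _ _) dF_dvd_g12
    (fun p hp hpa hpb => Nat.dvd_gcd (hpa.trans (Nat.gcd_dvd_left _ _))
      (Nat.dvd_gcd (hpa.trans (Nat.gcd_dvd_right _ _)) (hpb.trans (Nat.gcd_dvd_right _ _))))

lemma split_q2 (h2 : Squarefree q2) :
    dE12 q1 q2 q3 * (dE23 q1 q2 q3 * dF q1 q2 q3) ∣ q2 := by
  rw [dE23_mul]
  exact split_gen h2 (Nat.gcd_dvd_right _ _) (Nat.gcd_dvd_left _ _) dF_dvd_g12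
    (fun p hp hpa hpb => Nat.dvd_gcd (hpa.trans (Nat.gcd_dvd_left _ _))
      (Nat.dvd_gcd (hpa.trans (Nat.gcd_dvd_right _ _)) (hpb.trans (Nat.gcd_dvd_right _ _))))

lemma split_q3 (h3 : Squarefree q3) :
    dE13 q1 q2 q3 * (dE23 q1 q2 q3 * dF q1 q2 q3) ∣ q3 := by
  rw [dE23_mul]
  exact split_gen h3 (Nat.gcd_dvd_right _ _) (Nat.gcd_dvd_right _ _) dF_dvd_g13
    (fun p hp hpa hpb => Nat.dvd_gcd (hpa.trans (Nat.gcd_dvd_left _ _))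
      (Nat.dvd_gcd (hpb.trans (Nat.gcd_dvd_left _ _)) (hpa.trans (Nat.gcd_dvd_right _ _))))

lemma eq_q1 (h1 : Squarefree q1) :
    q1 = dA1 q1 q2 q3 * (dE12 q1 q2 q3 * (dE13 q1 q2 q3 * dF q1 q2 q3)) :=
  (Nat.div_mul_cancel (split_q1 h1)).symm

lemma eq_q2 (h2 : Squarefree q2) :
    q2 = dA2 q1 q2 q3 * (dE12 q1 q2 q3 * (dE23 q1 q2 q3 * dF q1 q2 q3)) :=
  (Nat.div_mul_cancel (split_q2 h2)).symm

lemma eq_q3 (h3 : Squarefree q3) :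
    q3 = dA3 q1 q2 q3 * (dE13 q1 q2 q3 * (dE23 q1 q2 q3 * dF q1 q2 q3)) :=
  (Nat.div_mul_cancel (split_q3 h3)).symm

lemma dA1_dvd {r : ℕ} (h1 : Squarefree q1) (hd1 : q1 ∣ r * q2 * q3) : dA1 q1 q2 q3 ∣ r := by
  have hA : dA1 q1 q2 q3 ∣ q1 := ⟨_, eq_q1 h1⟩
  refine sqf_dvd (h1.squarefree_of_dvd hA) fun p hp hpa => ?_
  have hpq1 : p ∣ q1 := hpa.trans hA
  have hdvd : p ∣ r * q2 * q3 := hpq1.trans hd1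
  have contra : ¬ p ∣ dE12 q1 q2 q3 * (dE13 q1 q2 q3 * dF q1 q2 q3) := by
    intro hpg
    have : p * p ∣ q1 := by
      conv_rhs => rw [eq_q1 h1 (q2 := q2) (q3 := q3)]
      exact mul_dvd_mul hpa hpg
    exact hp.not_isUnit (h1 p this)
  rcases hp.dvd_mul.mp hdvd with h | hq3
  · rcases hp.dvd_mul.mp h with h | hq2
    · exact h
    · exfalso
      refine contra ?_
      have h12 : p ∣ dE12 q1 q2 q3 * dF q1 q2 q3 := by
        rw [dE12_mul]; exact Nat.dvd_gcd hpq1 hq2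
      refine h12.trans ?_
      rw [dE13_mul]
      exact mul_dvd_mul_left _ dF_dvd_g13
  · exfalso
    refine contra ?_
    have h13 : p ∣ dE13 q1 q2 q3 * dF q1 q2 q3 := by
      rw [dE13_mul]; exact Nat.dvd_gcd hpq1 hq3
    exact h13.trans (dvd_mul_left _ _)

lemma dA2_dvd {r : ℕ} (h2 : Squarefree q2) (hd2 : q2 ∣ r * q1 * q3) : dA2 q1 q2 q3 ∣ r := by
  have hA : dA2 q1 q2 q3 ∣ q2 := ⟨_, eq_q2 h2⟩
  refine sqf_dvd (h2.squarefree_of_dvd hA) fun p hp hpa => ?_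
  have hpq2 : p ∣ q2 := hpa.trans hA
  have hdvd : p ∣ r * q1 * q3 := hpq2.trans hd2
  have contra : ¬ p ∣ dE12 q1 q2 q3 * (dE23 q1 q2 q3 * dF q1 q2 q3) := by
    intro hpg
    have : p * p ∣ q2 := by
      conv_rhs => rw [eq_q2 h2 (q1 := q1) (q3 := q3)]
      exact mul_dvd_mul hpa hpg
    exact hp.not_isUnit (h2 p this)
  rcases hp.dvd_mul.mp hdvd with h | hq3
  · rcases hp.dvd_mul.mp h with h | hq1
    · exact h
    · exfalso
      refine contra ?_
      have h12 : p ∣ dE12 q1 q2 q3 * dF q1 q2 q3 := by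
        rw [dE12_mul]; exact Nat.dvd_gcd hq1 hpq2
      refine h12.trans ?_
      rw [dE23_mul]
      exact mul_dvd_mul_left _ dF_dvd_g23
  · exfalso
    refine contra ?_
    have h23 : p ∣ dE23 q1 q2 q3 * dF q1 q2 q3 := by
      rw [dE23_mul]; exact Nat.dvd_gcd hpq2 hq3
    exact h23.trans (dvd_mul_left _ _)

lemma dA3_dvd {r : ℕ} (h3 : Squarefree q3) (hd3 : q3 ∣ r * q1 * q2) : dA3 q1 q2 q3 ∣ r := by
  have hA : dA3 q1 q2 q3 ∣ q3 := ⟨_, eq_q3 h3⟩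
  refine sqf_dvd (h3.squarefree_of_dvd hA) fun p hp hpa => ?_
  have hpq3 : p ∣ q3 := hpa.trans hA
  have hdvd : p ∣ r * q1 * q2 := hpq3.trans hd3
  have contra : ¬ p ∣ dE13 q1 q2 q3 * (dE23 q1 q2 q3 * dF q1 q2 q3) := by
    intro hpg
    have : p * p ∣ q3 := by
      conv_rhs => rw [eq_q3 h3 (q1 := q1) (q2 := q2)]
      exact mul_dvd_mul hpa hpg
    exact hp.not_isUnit (h3 p this)
  rcases hp.dvd_mul.mp hdvd with h | hq2
  · rcases hp.dvd_mul.mp h with h | hq1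
    · exact h
    · exfalso
      refine contra ?_
      have h13 : p ∣ dE13 q1 q2 q3 * dF q1 q2 q3 := by
        rw [dE13_mul]; exact Nat.dvd_gcd hq1 hpq3
      refine h13.trans ?_
      rw [dE23_mul]
      exact mul_dvd_mul_left _ dF_dvd_g23
  · exfalso
    refine contra ?_
    have h23 : p ∣ dE23 q1 q2 q3 * dF q1 q2 q3 := by
      rw [dE23_mul]; exact Nat.dvd_gcd hq2 hpq3
    exact h23.trans (dvd_mul_left _ _)

lemma dF_pos (hq1 : q1 ≠ 0) : 0 < dF q1 q2 q3 := Nat.gcd_pos_of_pos_left _ (Nat.pos_of_ne_zero hq1)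

lemma dE12_pos (hq1 : q1 ≠ 0) (hq2 : q2 ≠ 0) : 0 < dE12 q1 q2 q3 :=
  Nat.div_pos (Nat.le_of_dvd (Nat.gcd_pos_of_pos_left _ (Nat.pos_of_ne_zero hq1)) dF_dvd_g12)
    (dF_pos hq1)

lemma dE13_pos (hq1 : q1 ≠ 0) (hq3 : q3 ≠ 0) : 0 < dE13 q1 q2 q3 :=
  Nat.div_pos (Nat.le_of_dvd (Nat.gcd_pos_of_pos_left _ (Nat.pos_of_ne_zero hq1)) dF_dvd_g13)
    (dF_pos hq1)

lemma dE23_pos (hq1 : q1 ≠ 0) (hq2 : q2 ≠ 0) : 0 < dE23 q1 q2 q3 :=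
  Nat.div_pos (Nat.le_of_dvd (Nat.gcd_pos_of_pos_left _ (Nat.pos_of_ne_zero hq2)) dF_dvd_g23)
    (dF_pos hq1)

lemma dA1_pos (h1 : Squarefree q1) : 0 < dA1 q1 q2 q3 := by
  have := eq_q1 h1 (q2 := q2) (q3 := q3)
  rcases Nat.eq_zero_or_pos (dA1 q1 q2 q3) with h | h
  · exfalso; exact h1.ne_zero (by rw [this, h, zero_mul])
  · exact h

lemma dA2_pos (h2 : Squarefree q2) : 0 < dA2 q1 q2 q3 := by
  have := eq_q2 h2 (q1 := q1) (q3 := q3)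
  rcases Nat.eq_zero_or_pos (dA2 q1 q2 q3) with h | h
  · exfalso; exact h2.ne_zero (by rw [this, h, zero_mul])
  · exact h

lemma dA3_pos (h3 : Squarefree q3) : 0 < dA3 q1 q2 q3 := by
  have := eq_q3 h3 (q1 := q1) (q2 := q2)
  rcases Nat.eq_zero_or_pos (dA3 q1 q2 q3) with h | h
  · exfalso; exact h3.ne_zero (by rw [this, h, zero_mul])
  · exact h

end Decomp


lemma gather (a1 a2 a3 e1 e2 e3 f : ℝ≥0∞)
    (ha1 : a1 ≠ 0) (ha1t : a1 ≠ ⊤) (ha2 : a2 ≠ 0) (ha2t : a2 ≠ ⊤) (ha3 : a3 ≠ 0) (ha3t : a3 ≠ ⊤)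
    (he1 : e1 ≠ 0) (he1t : e1 ≠ ⊤) (he2 : e2 ≠ 0) (he2t : e2 ≠ ⊤) (he3 : e3 ≠ 0) (he3t : e3 ≠ ⊤)
    (hf : f ≠ 0) (hft : f ≠ ⊤) (x y : ℝ) :
    (a1 * (e1 * (e2 * f))) ^ x * ((a2 * (e1 * (e3 * f))) ^ y * (a3 * (e2 * (e3 * f))) ^ y) =
      a1 ^ x * (a2 ^ y * (a3 ^ y * (e1 ^ (x + y) * (e2 ^ (x + y) * (e3 ^ (y + y) *
        f ^ (x + (y + y))))))) := by
  have m1 : (a1 * (e1 * (e2 * f))) ^ x = a1 ^ x * (e1 ^ x * (e2 ^ x * f ^ x)) := by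
    rw [ENNReal.mul_rpow_of_ne_top ha1t (ENNReal.mul_ne_top he1t (ENNReal.mul_ne_top he2t hft)),
      ENNReal.mul_rpow_of_ne_top he1t (ENNReal.mul_ne_top he2t hft),
      ENNReal.mul_rpow_of_ne_top he2t hft]
  have m2 : (a2 * (e1 * (e3 * f))) ^ y = a2 ^ y * (e1 ^ y * (e3 ^ y * f ^ y)) := by
    rw [ENNReal.mul_rpow_of_ne_top ha2t (ENNReal.mul_ne_top he1t (ENNReal.mul_ne_top he3t hft)),
      ENNReal.mul_rpow_of_ne_top he1t (ENNReal.mul_ne_top he3t hft),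
      ENNReal.mul_rpow_of_ne_top he3t hft]
  have m3 : (a3 * (e2 * (e3 * f))) ^ y = a3 ^ y * (e2 ^ y * (e3 ^ y * f ^ y)) := by
    rw [ENNReal.mul_rpow_of_ne_top ha3t (ENNReal.mul_ne_top he2t (ENNReal.mul_ne_top he3t hft)),
      ENNReal.mul_rpow_of_ne_top he2t (ENNReal.mul_ne_top he3t hft),
      ENNReal.mul_rpow_of_ne_top he3t hft]
  rw [m1, m2, m3, ENNReal.rpow_add x y he1 he1t, ENNReal.rpow_add x y he2 he2t,
    ENNReal.rpow_add y y he3 he3t, ENNReal.rpow_add x (y+y) hf hft,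
    ENNReal.rpow_add y y hf hft]
  ring

def Pcond (r : ℕ) (t : ℕ × ℕ × ℕ) : Prop :=
  Squarefree t.1 ∧ Squarefree t.2.1 ∧ Squarefree t.2.2 ∧
    t.1 ∣ r * t.2.1 * t.2.2 ∧ t.2.1 ∣ r * t.1 * t.2.2 ∧ t.2.2 ∣ r * t.1 * t.2.1

instance (r : ℕ) (t : ℕ × ℕ × ℕ) : Decidable (Pcond r t) := by
  unfold Pcond; infer_instance

noncomputable def Phi (r : ℕ) (t : ℕ × ℕ × ℕ) : ℕ × ℕ × ℕ × ℕ × ℕ × ℕ × ℕ :=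
  if Pcond r t then
    (dA1 t.1 t.2.1 t.2.2, dA2 t.1 t.2.1 t.2.2, dA3 t.1 t.2.1 t.2.2,
     dE12 t.1 t.2.1 t.2.2, dE13 t.1 t.2.1 t.2.2, dE23 t.1 t.2.1 t.2.2, dF t.1 t.2.1 t.2.2)
  else (t.1, t.2.1, t.2.2, 0, 0, 0, 0)

lemma tsum_prod_mul' {α β : Type*} (F : α × β → ℝ≥0∞) (f : α → ℝ≥0∞) (g : β → ℝ≥0∞)
    (h : ∀ a b, F (a, b) = f a * g b) :
    ∑' p : α × β, F p = (∑' a, f a) * (∑' b, g b) := by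
  rw [ENNReal.tsum_prod']
  calc ∑' (a : α) (b : β), F (a, b) = ∑' (a : α) (b : β), f a * g b := by
        exact tsum_congr fun a => tsum_congr fun b => h a b
  _ = ∑' (a : α), f a * ∑' (b : β), g b := tsum_congr fun a => ENNReal.tsum_mul_left
  _ = (∑' a, f a) * (∑' b, g b) := ENNReal.tsum_mul_right

lemma tsum_prod7 (h1 h2 h3 h4 h5 h6 h7 : ℕ → ℝ≥0∞) :
    ∑' w : ℕ × ℕ × ℕ × ℕ × ℕ × ℕ × ℕ,
      (h1 w.1 * (h2 w.2.1 * (h3 w.2.2.1 * (h4 w.2.2.2.1 * (h5 w.2.2.2.2.1 *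
        (h6 w.2.2.2.2.2.1 * h7 w.2.2.2.2.2.2)))))) =
    (∑' n, h1 n) * ((∑' n, h2 n) * ((∑' n, h3 n) * ((∑' n, h4 n) * ((∑' n, h5 n) *
      ((∑' n, h6 n) * (∑' n, h7 n)))))) := by
  refine (tsum_prod_mul' _ h1 (fun u => h2 u.1 * (h3 u.2.1 * (h4 u.2.2.1 * (h5 u.2.2.2.1 *
      (h6 u.2.2.2.2.1 * h7 u.2.2.2.2.2))))) (fun a b => rfl)).trans ?_
  refine congrArg _ ?_
  refine (tsum_prod_mul' _ h2 (fun u => h3 u.1 * (h4 u.2.1 * (h5 u.2.2.1 *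
      (h6 u.2.2.2.1 * h7 u.2.2.2.2)))) (fun a b => rfl)).trans ?_
  refine congrArg _ ?_
  refine (tsum_prod_mul' _ h3 (fun u => h4 u.1 * (h5 u.2.1 * (h6 u.2.2.1 * h7 u.2.2.2)))
      (fun a b => rfl)).trans ?_
  refine congrArg _ ?_
  refine (tsum_prod_mul' _ h4 (fun u => h5 u.1 * (h6 u.2.1 * h7 u.2.2))
      (fun a b => rfl)).trans ?_
  refine congrArg _ ?_
  refine (tsum_prod_mul' _ h5 (fun u => h6 u.1 * h7 u.2) (fun a b => rfl)).trans ?_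
  refine congrArg _ ?_
  exact tsum_prod_mul' _ h6 h7 (fun a b => rfl)

noncomputable def Zs (s : ℝ) : ℝ≥0∞ := ∑' n : ℕ, if 1 ≤ n then ((n:ℝ≥0∞)) ^ s else 0

lemma Zs_ne_top {s : ℝ} (hs : s < -1) : Zs s ≠ ⊤ := pseries_ne_top s hs

lemma core (B : ℝ) (hB : 0 ≤ B) (η δ : ℝ) (hη : 0 < η) (hδ0 : 0 ≤ δ)
    (hx : δ + η - 1 ≤ 0) (hy : η - 1 ≤ 0)
    (hce : δ + 2*η - 2 < -1) (hc23 : 2*η - 2 < -1) (hcf : δ + 3*η - 3 < -1)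
    (CB : ℝ) (hCB : 1 ≤ CB)
    (hCBb : ∀ n : ℕ, 1 ≤ n → ((n.divisors.card : ℝ)) ^ B ≤ CB * (n : ℝ) ^ η) :
    ∃ K : ℝ≥0∞, K ≠ ⊤ ∧ ∀ r : ℕ, 0 < r →
      (∑' t : ℕ × ℕ × ℕ,
        (if Pcond r t
        then (t.1 : ℝ≥0∞) ^ δ *
              (((t.1.divisors.card : ℝ≥0∞) ^ B / (t.1 : ℝ≥0∞)) *
              ((t.2.1.divisors.card : ℝ≥0∞) ^ B / (t.2.1 : ℝ≥0∞)) *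
              ((t.2.2.divisors.card : ℝ≥0∞) ^ B / (t.2.2 : ℝ≥0∞)))
        else 0)) ≤ K * ((r.divisors.card : ℝ≥0∞)) ^ (3:ℕ) := by
  have hy' : η - 1 = η - 1 := rfl
  set y : ℝ := η - 1 with hydef
  set x : ℝ := δ + y with hxdef
  have hZce : Zs (x + y) ≠ ⊤ := by
    apply Zs_ne_top; rw [hxdef, hydef]; linarith
  have hZ23 : Zs (y + y) ≠ ⊤ := by
    apply Zs_ne_top; rw [hydef]; linarith
  have hZcf : Zs (x + (y + y)) ≠ ⊤ := by
    apply Zs_ne_top; rw [hxdef, hydef]; linarith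
  set cb : ℝ≥0∞ := ENNReal.ofReal CB with hcb
  have hcbt : cb ≠ ⊤ := ENNReal.ofReal_ne_top
  refine ⟨cb^3 * (Zs (x+y) * (Zs (x+y) * (Zs (y+y) * Zs (x+(y+y))))), ?_, ?_⟩
  · exact ENNReal.mul_ne_top (by simp [hcbt, ENNReal.pow_ne_top])
      (ENNReal.mul_ne_top hZce (ENNReal.mul_ne_top hZce (ENNReal.mul_ne_top hZ23 hZcf)))
  intro r hr
  -- termwise bound on the divisor function factor
  have tb : ∀ q : ℕ, 0 < q →
      ((q.divisors.card : ℝ≥0∞)) ^ B / (q:ℝ≥0∞) ≤ cb * (q:ℝ≥0∞) ^ y := by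
    intro q hq
    have hq0 : (q:ℝ≥0∞) ≠ 0 := by exact_mod_cast hq.ne'
    have hqt : (q:ℝ≥0∞) ≠ ⊤ := ENNReal.natCast_ne_top q
    have hcard : 0 < q.divisors.card :=
      Finset.card_pos.mpr ⟨1, Nat.one_mem_divisors.mpr hq.ne'⟩
    have h1 : ((q.divisors.card : ℝ≥0∞)) ^ B = ENNReal.ofReal ((q.divisors.card:ℝ) ^ B) := by
      rw [← ENNReal.ofReal_natCast, ENNReal.ofReal_rpow_of_pos (by exact_mod_cast hcard)]
    have h2 : ENNReal.ofReal ((q.divisors.card:ℝ) ^ B) ≤ ENNReal.ofReal (CB * (q:ℝ) ^ η) :=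
      ENNReal.ofReal_le_ofReal (hCBb q hq)
    have h3 : ENNReal.ofReal (CB * (q:ℝ) ^ η) = cb * (q:ℝ≥0∞) ^ η := by
      rw [hcb, ENNReal.ofReal_mul (by linarith),
        ← ENNReal.ofReal_rpow_of_pos (by exact_mod_cast hq : (0:ℝ) < (q:ℝ)),
        ENNReal.ofReal_natCast]
    have h4 : (q:ℝ≥0∞) ^ η / (q:ℝ≥0∞) = (q:ℝ≥0∞) ^ y := by
      rw [hydef, (by ring : η - 1 = η + (-1)), ENNReal.rpow_add _ _ hq0 hqt,
        ENNReal.rpow_neg_one, div_eq_mul_inv]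
    calc ((q.divisors.card : ℝ≥0∞)) ^ B / (q:ℝ≥0∞)
        ≤ (cb * (q:ℝ≥0∞) ^ η) / (q:ℝ≥0∞) := by
          rw [h1]; exact ENNReal.div_le_div_right (h2.trans h3.le) _
      _ = cb * ((q:ℝ≥0∞) ^ η / (q:ℝ≥0∞)) := by rw [mul_div_assoc]
      _ = cb * (q:ℝ≥0∞) ^ y := by rw [h4]
  set G : ℕ × ℕ × ℕ × ℕ × ℕ × ℕ × ℕ → ℝ≥0∞ := fun w =>
    cb^3 *
    ((if w.1 ∣ r ∧ 1 ≤ w.1 then (w.1:ℝ≥0∞) ^ x else 0) *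
    ((if w.2.1 ∣ r ∧ 1 ≤ w.2.1 then (w.2.1:ℝ≥0∞) ^ y else 0) *
    ((if w.2.2.1 ∣ r ∧ 1 ≤ w.2.2.1 then (w.2.2.1:ℝ≥0∞) ^ y else 0) *
    ((if 1 ≤ w.2.2.2.1 then (w.2.2.2.1:ℝ≥0∞) ^ (x+y) else 0) *
    ((if 1 ≤ w.2.2.2.2.1 then (w.2.2.2.2.1:ℝ≥0∞) ^ (x+y) else 0) *
    ((if 1 ≤ w.2.2.2.2.2.1 then (w.2.2.2.2.2.1:ℝ≥0∞) ^ (y+y) else 0) *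
    (if 1 ≤ w.2.2.2.2.2.2 then (w.2.2.2.2.2.2:ℝ≥0∞) ^ (x+(y+y)) else 0))))))) with hG
  have hinj : Function.Injective (Phi r) := by
    rintro ⟨q1, q2, q3⟩ ⟨p1, p2, p3⟩ h
    by_cases hP : Pcond r (q1, q2, q3) <;> by_cases hQ : Pcond r (p1, p2, p3) <;>
      simp only [Phi, if_pos, if_neg, hP, hQ, if_true, if_false, Prod.mk.injEq] at h ⊢
    · obtain ⟨e1, e2, e3, e4, e5, e6, e7⟩ := h
      obtain ⟨hs1, hs2, hs3, -⟩ := hP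
      obtain ⟨ht1, ht2, ht3, -⟩ := hQ
      simp only at hs1 hs2 hs3 ht1 ht2 ht3 e1 e2 e3 e4 e5 e6 e7
      refine ⟨?_, ?_, ?_⟩
      · rw [eq_q1 (q2 := q2) (q3 := q3) hs1, eq_q1 (q2 := p2) (q3 := p3) ht1, e1, e4, e5, e7]
      · rw [eq_q2 (q1 := q1) (q3 := q3) hs2, eq_q2 (q1 := p1) (q3 := p3) ht2, e2, e4, e6, e7]
      · rw [eq_q3 (q1 := q1) (q2 := q2) hs3, eq_q3 (q1 := p1) (q2 := p2) ht3, e3, e5, e6, e7]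
    · exact absurd h.2.2.2.2.2.2 (by simpa using (dF_pos (q2 := q2) (q3 := q3) hP.1.ne_zero).ne')
    · exact absurd h.2.2.2.2.2.2.symm
        (by simpa using (dF_pos (q2 := p2) (q3 := p3) hQ.1.ne_zero).ne')
    · exact ⟨h.1, h.2.1, h.2.2.1⟩
  have hterm : ∀ t : ℕ × ℕ × ℕ,
      (if Pcond r t
        then (t.1 : ℝ≥0∞) ^ δ *
              (((t.1.divisors.card : ℝ≥0∞) ^ B / (t.1 : ℝ≥0∞)) *
              ((t.2.1.divisors.card : ℝ≥0∞) ^ B / (t.2.1 : ℝ≥0∞)) *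
              ((t.2.2.divisors.card : ℝ≥0∞) ^ B / (t.2.2 : ℝ≥0∞)))
        else 0) ≤ G (Phi r t) := by
    intro t
    by_cases hP : Pcond r t
    · rw [if_pos hP]
      obtain ⟨h1, h2, h3, hd1, hd2, hd3⟩ := hP
      have hq1 : 0 < t.1 := Nat.pos_of_ne_zero h1.ne_zero
      have hq2 : 0 < t.2.1 := Nat.pos_of_ne_zero h2.ne_zero
      have hq3 : 0 < t.2.2 := Nat.pos_of_ne_zero h3.ne_zero
      have hq10 : (t.1 : ℝ≥0∞) ≠ 0 := by exact_mod_cast hq1.ne'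
      have hq1t : (t.1 : ℝ≥0∞) ≠ ⊤ := ENNReal.natCast_ne_top _
      have hP' : Pcond r t := ⟨h1, h2, h3, hd1, hd2, hd3⟩
      have hPhi : Phi r t = (dA1 t.1 t.2.1 t.2.2, dA2 t.1 t.2.1 t.2.2, dA3 t.1 t.2.1 t.2.2,
          dE12 t.1 t.2.1 t.2.2, dE13 t.1 t.2.1 t.2.2, dE23 t.1 t.2.1 t.2.2,
          dF t.1 t.2.1 t.2.2) := by
        rw [Phi, if_pos hP']
      rw [hPhi, hG]
      simp only
      rw [if_pos ⟨dA1_dvd h1 hd1, dA1_pos h1⟩, if_pos ⟨dA2_dvd h2 hd2, dA2_pos h2⟩,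
        if_pos ⟨dA3_dvd h3 hd3, dA3_pos h3⟩, if_pos (show 1 ≤ dE12 t.1 t.2.1 t.2.2 from dE12_pos hq1.ne' hq2.ne'),
        if_pos (show 1 ≤ dE13 t.1 t.2.1 t.2.2 from dE13_pos hq1.ne' hq3.ne'),
        if_pos (show 1 ≤ dE23 t.1 t.2.1 t.2.2 from dE23_pos hq1.ne' hq2.ne'),
        if_pos (show 1 ≤ dF t.1 t.2.1 t.2.2 from dF_pos hq1.ne')]
      have hq1e : (t.1 : ℝ≥0∞) = (dA1 t.1 t.2.1 t.2.2 : ℝ≥0∞) *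
          ((dE12 t.1 t.2.1 t.2.2 : ℝ≥0∞) * ((dE13 t.1 t.2.1 t.2.2 : ℝ≥0∞) *
            (dF t.1 t.2.1 t.2.2 : ℝ≥0∞))) := by
        push_cast
        exact_mod_cast congrArg (Nat.cast (R := ℝ≥0∞)) (eq_q1 h1)
      have hq2e : (t.2.1 : ℝ≥0∞) = (dA2 t.1 t.2.1 t.2.2 : ℝ≥0∞) *
          ((dE12 t.1 t.2.1 t.2.2 : ℝ≥0∞) * ((dE23 t.1 t.2.1 t.2.2 : ℝ≥0∞) *
            (dF t.1 t.2.1 t.2.2 : ℝ≥0∞))) := by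
        push_cast
        exact_mod_cast congrArg (Nat.cast (R := ℝ≥0∞)) (eq_q2 h2)
      have hq3e : (t.2.2 : ℝ≥0∞) = (dA3 t.1 t.2.1 t.2.2 : ℝ≥0∞) *
          ((dE13 t.1 t.2.1 t.2.2 : ℝ≥0∞) * ((dE23 t.1 t.2.1 t.2.2 : ℝ≥0∞) *
            (dF t.1 t.2.1 t.2.2 : ℝ≥0∞))) := by
        push_cast
        exact_mod_cast congrArg (Nat.cast (R := ℝ≥0∞)) (eq_q3 h3)
      calc (t.1 : ℝ≥0∞) ^ δ *
              (((t.1.divisors.card : ℝ≥0∞) ^ B / (t.1 : ℝ≥0∞)) *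
              ((t.2.1.divisors.card : ℝ≥0∞) ^ B / (t.2.1 : ℝ≥0∞)) *
              ((t.2.2.divisors.card : ℝ≥0∞) ^ B / (t.2.2 : ℝ≥0∞)))
          ≤ (t.1 : ℝ≥0∞) ^ δ *
              ((cb * (t.1:ℝ≥0∞) ^ y) * (cb * (t.2.1:ℝ≥0∞) ^ y) * (cb * (t.2.2:ℝ≥0∞) ^ y)) :=
            mul_le_mul' le_rfl
              (mul_le_mul' (mul_le_mul' (tb _ hq1) (tb _ hq2)) (tb _ hq3))
        _ = cb^3 * (((t.1:ℝ≥0∞) ^ δ * (t.1:ℝ≥0∞) ^ y) *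
              ((t.2.1:ℝ≥0∞) ^ y * (t.2.2:ℝ≥0∞) ^ y)) := by ring
        _ = cb^3 * ((t.1:ℝ≥0∞) ^ x * ((t.2.1:ℝ≥0∞) ^ y * (t.2.2:ℝ≥0∞) ^ y)) := by
            rw [← ENNReal.rpow_add δ y hq10 hq1t, ← hxdef]
        _ = cb^3 * ((dA1 t.1 t.2.1 t.2.2 : ℝ≥0∞) ^ x * ((dA2 t.1 t.2.1 t.2.2 : ℝ≥0∞) ^ y *
              ((dA3 t.1 t.2.1 t.2.2 : ℝ≥0∞) ^ y * ((dE12 t.1 t.2.1 t.2.2 : ℝ≥0∞) ^ (x+y) *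
              ((dE13 t.1 t.2.1 t.2.2 : ℝ≥0∞) ^ (x+y) * ((dE23 t.1 t.2.1 t.2.2 : ℝ≥0∞) ^ (y+y) *
              (dF t.1 t.2.1 t.2.2 : ℝ≥0∞) ^ (x+(y+y)))))))) := by
            rw [hq1e, hq2e, hq3e, gather _ _ _ _ _ _ _
              (by exact_mod_cast (dA1_pos h1).ne') (ENNReal.natCast_ne_top _)
              (by exact_mod_cast (dA2_pos h2).ne') (ENNReal.natCast_ne_top _)
              (by exact_mod_cast (dA3_pos h3).ne') (ENNReal.natCast_ne_top _)
              (by exact_mod_cast (dE12_pos hq1.ne' hq2.ne').ne') (ENNReal.natCast_ne_top _)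
              (by exact_mod_cast (dE13_pos hq1.ne' hq3.ne').ne') (ENNReal.natCast_ne_top _)
              (by exact_mod_cast (dE23_pos hq1.ne' hq2.ne').ne') (ENNReal.natCast_ne_top _)
              (by exact_mod_cast (dF_pos hq1.ne').ne') (ENNReal.natCast_ne_top _) x y]
    · rw [if_neg hP]
      exact zero_le
  calc (∑' t : ℕ × ℕ × ℕ,
        (if Pcond r t
        then (t.1 : ℝ≥0∞) ^ δ *
              (((t.1.divisors.card : ℝ≥0∞) ^ B / (t.1 : ℝ≥0∞)) *
              ((t.2.1.divisors.card : ℝ≥0∞) ^ B / (t.2.1 : ℝ≥0∞)) *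
              ((t.2.2.divisors.card : ℝ≥0∞) ^ B / (t.2.2 : ℝ≥0∞)))
        else 0))
      ≤ ∑' w : ℕ × ℕ × ℕ × ℕ × ℕ × ℕ × ℕ, G w :=
        ENNReal.summable.tsum_le_tsum_of_inj (Phi r) hinj (fun _ _ => zero_le) hterm
          ENNReal.summable
    _ = cb^3 * ((∑' n : ℕ, if n ∣ r ∧ 1 ≤ n then (n:ℝ≥0∞) ^ x else 0) *
          ((∑' n : ℕ, if n ∣ r ∧ 1 ≤ n then (n:ℝ≥0∞) ^ y else 0) *
          ((∑' n : ℕ, if n ∣ r ∧ 1 ≤ n then (n:ℝ≥0∞) ^ y else 0) *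
          (Zs (x+y) * (Zs (x+y) * (Zs (y+y) * Zs (x+(y+y)))))))) := by
        rw [hG]
        rw [ENNReal.tsum_mul_left]
        rw [tsum_prod7 (fun n => if n ∣ r ∧ 1 ≤ n then (n:ℝ≥0∞) ^ x else 0)
          (fun n => if n ∣ r ∧ 1 ≤ n then (n:ℝ≥0∞) ^ y else 0)
          (fun n => if n ∣ r ∧ 1 ≤ n then (n:ℝ≥0∞) ^ y else 0)
          (fun n => if 1 ≤ n then (n:ℝ≥0∞) ^ (x+y) else 0)
          (fun n => if 1 ≤ n then (n:ℝ≥0∞) ^ (x+y) else 0)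
          (fun n => if 1 ≤ n then (n:ℝ≥0∞) ^ (y+y) else 0)
          (fun n => if 1 ≤ n then (n:ℝ≥0∞) ^ (x+(y+y)) else 0)]
        rfl
    _ ≤ cb^3 * ((r.divisors.card : ℝ≥0∞) * ((r.divisors.card : ℝ≥0∞) *
          ((r.divisors.card : ℝ≥0∞) *
          (Zs (x+y) * (Zs (x+y) * (Zs (y+y) * Zs (x+(y+y)))))))) := by
        gcongr
        · exact div_sum_le r hr x (by rw [hxdef, hydef]; linarith)
        · exact div_sum_le r hr y (by rw [hydef]; linarith)
        · exact div_sum_le r hr y (by rw [hydef]; linarith)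
    _ = cb^3 * (Zs (x+y) * (Zs (x+y) * (Zs (y+y) * Zs (x+(y+y))))) *
          ((r.divisors.card : ℝ≥0∞)) ^ (3:ℕ) := by ring

/-- Lemma 9.4: for `B ≥ 0` and `ε > 0` there is `C` such that for all `X ≥ 1` and positive
integers `r`, the sum of `(τ(q₁)^B/q₁)(τ(q₂)^B/q₂)(τ(q₃)^B/q₃)` over all triples of
squarefree positive integers with `max(q₁,q₂,q₃) ≥ X`, `q₁ ∣ rq₂q₃`, `q₂ ∣ rq₁q₃`,
`q₃ ∣ rq₁q₂` is at most `C · r^ε · X^(ε-1)`. (The sum, of nonnegative terms over an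
infinite index set, is taken in `ℝ≥0∞`.) -/
theorem lem12 (B : ℝ) (hB : 0 ≤ B) (ε : ℝ) (hε : 0 < ε) :
    ∃ C : ℝ, 0 < C ∧ ∀ X : ℝ, 1 ≤ X → ∀ r : ℕ, 0 < r →
      (∑' t : ℕ × ℕ × ℕ,
        (if Squarefree t.1 ∧ Squarefree t.2.1 ∧ Squarefree t.2.2 ∧
            X ≤ max (t.1 : ℝ) (max (t.2.1 : ℝ) (t.2.2 : ℝ)) ∧
            t.1 ∣ r * t.2.1 * t.2.2 ∧ t.2.1 ∣ r * t.1 * t.2.2 ∧ t.2.2 ∣ r * t.1 * t.2.1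
        then ((t.1.divisors.card : ℝ≥0∞) ^ B / (t.1 : ℝ≥0∞)) *
              ((t.2.1.divisors.card : ℝ≥0∞) ^ B / (t.2.1 : ℝ≥0∞)) *
              ((t.2.2.divisors.card : ℝ≥0∞) ^ B / (t.2.2 : ℝ≥0∞))
        else 0)) ≤
      ENNReal.ofReal (C * (r : ℝ) ^ ε * X ^ (ε - 1)) := by
  classical
  have hm : 0 < min ε 1 := lt_min hε one_pos
  set ε' : ℝ := min ε 1 / 2 with hε'def
  have hε'pos : 0 < ε' := by rw [hε'def]; linarith
  have hε'le : ε' ≤ ε := by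
    rw [hε'def]; have := min_le_left ε 1; linarith [hε.le]
  have hε'le1 : ε' ≤ 1/2 := by rw [hε'def]; have := min_le_right ε 1; linarith
  set η : ℝ := ε' / 8 with hηdef
  set δ : ℝ := 1 - ε' with hδdef
  have hηpos : 0 < η := by rw [hηdef]; linarith
  have hδ0 : 0 ≤ δ := by rw [hδdef]; linarith
  obtain ⟨CB, hCB1, hCBb⟩ := tau_pow_bound B hB η hηpos
  obtain ⟨K, hKt, hKb⟩ := core B hB η δ hηpos hδ0
    (by rw [hηdef, hδdef]; linarith) (by rw [hηdef]; linarith)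
    (by rw [hηdef, hδdef]; linarith) (by rw [hηdef]; linarith)
    (by rw [hηdef, hδdef]; linarith) CB hCB1 hCBb
  obtain ⟨C0, hC01, hC0b⟩ := tau_rpow_bound (ε'/3) (by positivity)
  have hKr0 : 0 ≤ K.toReal := ENNReal.toReal_nonneg
  refine ⟨3 * K.toReal * C0^3 + 1, by positivity, ?_⟩
  intro X hX r hr
  set X' : ℝ≥0∞ := ENNReal.ofReal X with hX'def
  have hX'1 : 1 ≤ X' := by
    rw [hX'def]; exact ENNReal.one_le_ofReal.mpr hX
  have hX'0 : X' ≠ 0 := by intro h; rw [h] at hX'1; simp at hX'1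
  have hX't : X' ≠ ⊤ := ENNReal.ofReal_ne_top
  set Fc : ℕ × ℕ × ℕ → ℝ≥0∞ := fun t =>
    (if Pcond r t
    then (t.1 : ℝ≥0∞) ^ δ *
          (((t.1.divisors.card : ℝ≥0∞) ^ B / (t.1 : ℝ≥0∞)) *
          ((t.2.1.divisors.card : ℝ≥0∞) ^ B / (t.2.1 : ℝ≥0∞)) *
          ((t.2.2.divisors.card : ℝ≥0∞) ^ B / (t.2.2 : ℝ≥0∞)))
    else 0) with hFc
  -- pointwise bound
  have hpt : ∀ t : ℕ × ℕ × ℕ,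
      (if Squarefree t.1 ∧ Squarefree t.2.1 ∧ Squarefree t.2.2 ∧
            X ≤ max (t.1 : ℝ) (max (t.2.1 : ℝ) (t.2.2 : ℝ)) ∧
            t.1 ∣ r * t.2.1 * t.2.2 ∧ t.2.1 ∣ r * t.1 * t.2.2 ∧ t.2.2 ∣ r * t.1 * t.2.1
        then ((t.1.divisors.card : ℝ≥0∞) ^ B / (t.1 : ℝ≥0∞)) *
              ((t.2.1.divisors.card : ℝ≥0∞) ^ B / (t.2.1 : ℝ≥0∞)) *
              ((t.2.2.divisors.card : ℝ≥0∞) ^ B / (t.2.2 : ℝ≥0∞))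
        else 0) ≤
      X' ^ (-δ) * (Fc t + (Fc (t.2.1, t.1, t.2.2) + Fc (t.2.2, t.2.1, t.1))) := by
    intro t
    by_cases hP : Squarefree t.1 ∧ Squarefree t.2.1 ∧ Squarefree t.2.2 ∧
        X ≤ max (t.1 : ℝ) (max (t.2.1 : ℝ) (t.2.2 : ℝ)) ∧
        t.1 ∣ r * t.2.1 * t.2.2 ∧ t.2.1 ∣ r * t.1 * t.2.2 ∧ t.2.2 ∣ r * t.1 * t.2.1
    swap
    · rw [if_neg hP]; exact zero_le
    rw [if_pos hP]
    obtain ⟨h1, h2, h3, hmax, hd1, hd2, hd3⟩ := hP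
    have hQ1 : Pcond r t := ⟨h1, h2, h3, hd1, hd2, hd3⟩
    have hQ2 : Pcond r (t.2.1, t.1, t.2.2) := by
      refine ⟨h2, h1, h3, hd2, hd1, ?_⟩
      simpa only [mul_right_comm] using hd3
    have hQ3 : Pcond r (t.2.2, t.2.1, t.1) := by
      refine ⟨h3, h2, h1, ?_, ?_, ?_⟩
      · simpa only [mul_right_comm] using hd3
      · simpa only [mul_right_comm] using hd2
      · simpa only [mul_right_comm] using hd1
    set D1 : ℝ≥0∞ := (t.1.divisors.card : ℝ≥0∞) ^ B / (t.1 : ℝ≥0∞) with hD1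
    set D2 : ℝ≥0∞ := (t.2.1.divisors.card : ℝ≥0∞) ^ B / (t.2.1 : ℝ≥0∞) with hD2
    set D3 : ℝ≥0∞ := (t.2.2.divisors.card : ℝ≥0∞) ^ B / (t.2.2 : ℝ≥0∞) with hD3
    have hev1 : Fc t = (t.1 : ℝ≥0∞) ^ δ * (D1 * D2 * D3) := by
      simp only [hFc, if_pos hQ1]; rfl
    have hev2 : Fc (t.2.1, t.1, t.2.2) = (t.2.1 : ℝ≥0∞) ^ δ * (D2 * D1 * D3) := by
      simp only [hFc, if_pos hQ2]; rfl
    have hev3 : Fc (t.2.2, t.2.1, t.1) = (t.2.2 : ℝ≥0∞) ^ δ * (D3 * D2 * D1) := by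
      simp only [hFc, if_pos hQ3]; rfl
    have hS : 1 ≤ X' ^ (-δ) *
        ((t.1 : ℝ≥0∞) ^ δ + ((t.2.1 : ℝ≥0∞) ^ δ + (t.2.2 : ℝ≥0∞) ^ δ)) := by
      have hone : (1:ℝ≥0∞) = X' ^ (-δ) * X' ^ δ := by
        rw [← ENNReal.rpow_add _ _ hX'0 hX't, neg_add_cancel, ENNReal.rpow_zero]
      have hXq : X' ^ δ ≤ (t.1 : ℝ≥0∞) ^ δ + ((t.2.1 : ℝ≥0∞) ^ δ + (t.2.2 : ℝ≥0∞) ^ δ) := by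
        have step : ∀ q : ℕ, X ≤ (q:ℝ) → X' ^ δ ≤ (q : ℝ≥0∞) ^ δ := by
          intro q hq
          refine ENNReal.rpow_le_rpow ?_ hδ0
          rw [hX'def, ← ENNReal.ofReal_natCast]
          exact ENNReal.ofReal_le_ofReal hq
        rcases le_max_iff.mp hmax with h | h
        · exact (step _ h).trans le_self_add
        rcases le_max_iff.mp h with h | h
        · exact (step _ h).trans (le_self_add.trans (self_le_add_left _ _))
        · exact (step _ h).trans ((self_le_add_left _ _).trans (self_le_add_left _ _))
      calc (1:ℝ≥0∞) = X' ^ (-δ) * X' ^ δ := hone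
        _ ≤ _ := mul_le_mul' le_rfl hXq
    calc D1 * D2 * D3 = 1 * (D1 * D2 * D3) := (one_mul _).symm
      _ ≤ (X' ^ (-δ) * ((t.1 : ℝ≥0∞) ^ δ + ((t.2.1 : ℝ≥0∞) ^ δ + (t.2.2 : ℝ≥0∞) ^ δ))) *
            (D1 * D2 * D3) := mul_le_mul' hS le_rfl
      _ = X' ^ (-δ) * (Fc t + (Fc (t.2.1, t.1, t.2.2) + Fc (t.2.2, t.2.1, t.1))) := by
          rw [hev1, hev2, hev3]; ring
  have he2 : (∑' t : ℕ × ℕ × ℕ, Fc (t.2.1, t.1, t.2.2)) = ∑' t, Fc t :=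
    Equiv.tsum_eq (⟨fun t => (t.2.1, t.1, t.2.2), fun t => (t.2.1, t.1, t.2.2),
      fun ⟨a,b,c⟩ => rfl, fun ⟨a,b,c⟩ => rfl⟩ : (ℕ×ℕ×ℕ) ≃ (ℕ×ℕ×ℕ)) Fc
  have he3 : (∑' t : ℕ × ℕ × ℕ, Fc (t.2.2, t.2.1, t.1)) = ∑' t, Fc t :=
    Equiv.tsum_eq (⟨fun t => (t.2.2, t.2.1, t.1), fun t => (t.2.2, t.2.1, t.1),
      fun ⟨a,b,c⟩ => rfl, fun ⟨a,b,c⟩ => rfl⟩ : (ℕ×ℕ×ℕ) ≃ (ℕ×ℕ×ℕ)) Fc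
  have hXp : X' ^ (-δ) ≤ ENNReal.ofReal (X ^ (ε-1)) := by
    have e1 : -δ = ε' - 1 := by rw [hδdef]; ring
    rw [e1]
    calc X' ^ (ε'-1) ≤ X' ^ (ε-1) :=
          ENNReal.rpow_le_rpow_of_exponent_le hX'1 (by linarith)
      _ = ENNReal.ofReal (X ^ (ε-1)) := by
          rw [hX'def, ENNReal.ofReal_rpow_of_pos (by linarith)]
  have hr1 : (1:ℝ) ≤ (r:ℝ) := by exact_mod_cast hr
  have hτ : ((r.divisors.card : ℝ≥0∞)) ^ (3:ℕ) ≤ ENNReal.ofReal (C0^3 * (r:ℝ) ^ ε') := by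
    have h1 : (r.divisors.card : ℝ≥0∞) ≤ ENNReal.ofReal (C0 * (r:ℝ) ^ (ε'/3)) := by
      rw [← ENNReal.ofReal_natCast]
      exact ENNReal.ofReal_le_ofReal (hC0b r hr)
    calc ((r.divisors.card : ℝ≥0∞)) ^ (3:ℕ)
        ≤ (ENNReal.ofReal (C0 * (r:ℝ) ^ (ε'/3))) ^ (3:ℕ) := pow_le_pow_left' h1 3
      _ = ENNReal.ofReal ((C0 * (r:ℝ) ^ (ε'/3)) ^ (3:ℕ)) :=
          (ENNReal.ofReal_pow (by positivity) 3).symm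
      _ = ENNReal.ofReal (C0^3 * (r:ℝ) ^ ε') := by
          congr 1
          rw [mul_pow]
          congr 1
          rw [← Real.rpow_natCast ((r:ℝ) ^ (ε'/3)) 3, ← Real.rpow_mul (Nat.cast_nonneg r)]
          norm_num
  calc (∑' t : ℕ × ℕ × ℕ,
        (if Squarefree t.1 ∧ Squarefree t.2.1 ∧ Squarefree t.2.2 ∧
            X ≤ max (t.1 : ℝ) (max (t.2.1 : ℝ) (t.2.2 : ℝ)) ∧
            t.1 ∣ r * t.2.1 * t.2.2 ∧ t.2.1 ∣ r * t.1 * t.2.2 ∧ t.2.2 ∣ r * t.1 * t.2.1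
        then ((t.1.divisors.card : ℝ≥0∞) ^ B / (t.1 : ℝ≥0∞)) *
              ((t.2.1.divisors.card : ℝ≥0∞) ^ B / (t.2.1 : ℝ≥0∞)) *
              ((t.2.2.divisors.card : ℝ≥0∞) ^ B / (t.2.2 : ℝ≥0∞))
        else 0))
      ≤ ∑' t : ℕ × ℕ × ℕ,
          X' ^ (-δ) * (Fc t + (Fc (t.2.1, t.1, t.2.2) + Fc (t.2.2, t.2.1, t.1))) :=
        ENNReal.tsum_le_tsum hpt
    _ = X' ^ (-δ) * ∑' t : ℕ × ℕ × ℕ,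
          (Fc t + (Fc (t.2.1, t.1, t.2.2) + Fc (t.2.2, t.2.1, t.1))) := ENNReal.tsum_mul_left
    _ = X' ^ (-δ) * ((∑' t, Fc t) + ((∑' t : ℕ × ℕ × ℕ, Fc (t.2.1, t.1, t.2.2)) +
          (∑' t : ℕ × ℕ × ℕ, Fc (t.2.2, t.2.1, t.1)))) := by
        rw [ENNReal.tsum_add, ENNReal.tsum_add]
    _ = X' ^ (-δ) * (3 * ∑' t, Fc t) := by rw [he2, he3]; ring
    _ ≤ X' ^ (-δ) * (3 * (K * ((r.divisors.card : ℝ≥0∞)) ^ (3:ℕ))) := by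
        gcongr
        exact hKb r hr
    _ ≤ ENNReal.ofReal (X ^ (ε-1)) * ((3:ℝ≥0∞) *
          (ENNReal.ofReal K.toReal * ENNReal.ofReal (C0^3 * (r:ℝ) ^ ε'))) := by
        refine mul_le_mul' hXp (mul_le_mul' le_rfl (mul_le_mul' ?_ hτ))
        exact (ENNReal.ofReal_toReal hKt).symm.le
    _ = ENNReal.ofReal (X ^ (ε-1) * (3 * (K.toReal * (C0^3 * (r:ℝ) ^ ε')))) := by
        rw [ENNReal.ofReal_mul (Real.rpow_nonneg (by linarith : (0:ℝ) ≤ X) _),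
          ENNReal.ofReal_mul (by norm_num : (0:ℝ) ≤ 3),
          ENNReal.ofReal_mul hKr0, ENNReal.ofReal_ofNat]
    _ ≤ ENNReal.ofReal ((3 * K.toReal * C0^3 + 1) * (r : ℝ) ^ ε * X ^ (ε - 1)) := by
        refine ENNReal.ofReal_le_ofReal ?_
        have hrr : (r:ℝ) ^ ε' ≤ (r:ℝ) ^ ε :=
          Real.rpow_le_rpow_of_exponent_le hr1 hε'le
        have heq : X ^ (ε-1) * (3 * (K.toReal * (C0^3 * (r:ℝ) ^ ε'))) =
            (3 * K.toReal * C0^3) * (r:ℝ) ^ ε' * X ^ (ε-1) := by ring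
        rw [heq]
        have hX0 : (0:ℝ) ≤ X ^ (ε-1) := Real.rpow_nonneg (by linarith) _
        have h1 : (3 * K.toReal * C0^3) * (r:ℝ) ^ ε' ≤ (3 * K.toReal * C0^3 + 1) * (r:ℝ) ^ ε := by
          have hc : (0:ℝ) ≤ 3 * K.toReal * C0^3 := by positivity
          nlinarith [Real.rpow_nonneg (show (0:ℝ) ≤ (r:ℝ) by linarith) ε']
        exact mul_le_mul_of_nonneg_right h1 hX0
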